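/- arXiv:1801.01816 — 5 statements merged into one kernel-verified Lean document; each statement's English description precedes it below -/
import Mathlib

section
/- In a standard Pólya urn initialized with $k$ red and $\ell-k$ blue balls (where $1 \le k \le \ell-1$), the proportion of red balls after $n$ draws converges in distribution, as $n \to \infty$, to a Beta$(k, \ell-k)$ random variable. -/
set_option maxHeartbeats 1000000

open MeasureTheory Filter
open scoped ENNReal unitInterval

/-- One step of the standard Pólya urn: if the urn currently contains `r` red balls out of
`t` balls in total, a ball is drawn uniformly at random (so it is red with probability `r/t`)
and replaced together with an additional ball of the same colour; we track the red count. -/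
noncomputable def polyaStep (t r : ℕ) : PMF ℕ :=
  (PMF.bernoulli (min ((r : ENNReal) / (t : ENNReal)) 1).toNNReal
    (by simpa using ENNReal.toNNReal_mono ENNReal.one_ne_top (min_le_right _ _))).map
    fun b => if b then r + 1 else r

/-- Red-ball count of a standard Pólya urn after `n` draws, started from `k` red balls and
`t` balls in total. -/
noncomputable def polya (k t : ℕ) : ℕ → PMF ℕ
  | 0 => PMF.pure k
  | n + 1 => (polya k t n).bind fun r => polyaStep (t + n) r

/-- The Beta distribution with positive integer parameters `a`, `b`:
density `(a+b-1)!/((a-1)!(b-1)!) · x^(a-1) (1-x)^(b-1)` on `(0,1)`. -/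
noncomputable def betaMeasure (a b : ℕ) : Measure ℝ :=
  (volume.restrict (Set.Ioo (0 : ℝ) 1)).withDensity fun x =>
    ENNReal.ofReal
      ((Nat.factorial (a + b - 1) : ℝ) / (Nat.factorial (a - 1) * Nat.factorial (b - 1)) *
        x ^ (a - 1) * (1 - x) ^ (b - 1))

lemma polyaStep_apply (t s x : ℕ) :
    polyaStep t s x = (if x = s then 1 - min ((s : ENNReal) / t) 1 else 0)
      + (if x = s + 1 then min ((s : ENNReal) / t) 1 else 0) := by
  rw [polyaStep, PMF.map_apply, tsum_bool]
  simp [PMF.bernoulli, PMF.ofFintype_apply,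
    ENNReal.coe_toNNReal (ne_top_of_le_ne_top ENNReal.one_ne_top (min_le_right _ _))]

lemma polya_rec (k t n r : ℕ) (hr : 1 ≤ r) :
    polya k t (n + 1) r
      = polya k t n (r - 1) * min (((r:ℕ) - 1 : ℕ) / ((t + n : ℕ) : ENNReal)) 1
        + polya k t n r * (1 - min (((r : ℕ) : ENNReal) / ((t + n : ℕ) : ENNReal)) 1) := by
  show (polya k t n).bind _ r = _
  rw [PMF.bind_apply]
  have : ∀ s : ℕ, polya k t n s * polyaStep (t + n) s r
      = (if r = s + 1 then polya k t n s * min ((s : ENNReal) / (t + n : ℕ)) 1 else 0)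
        + (if r = s then polya k t n s * (1 - min ((s : ENNReal) / (t + n : ℕ)) 1) else 0) := by
    intro s
    rw [polyaStep_apply]
    by_cases h1 : r = s + 1 <;> by_cases h2 : r = s <;> simp [h1, h2, mul_add] <;> omega
  rw [tsum_congr this, ENNReal.tsum_add]
  congr 1
  · rw [tsum_eq_single (r - 1)]
    · simp [Nat.sub_add_cancel hr]
    · intro s hs
      rw [if_neg]; omega
  · rw [tsum_eq_single r]
    · simp
    · intro s hs
      rw [if_neg]; omega

lemma polya_support {k t : ℕ} : ∀ n r, polya k t n r ≠ 0 → k ≤ r ∧ r ≤ k + n := by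
  intro n
  induction n with
  | zero => intro r h; simp [polya, PMF.pure_apply] at h; omega
  | succ n ih =>
    intro r h
    rw [show polya k t (n+1) = (polya k t n).bind fun r => polyaStep (t + n) r from rfl,
      PMF.bind_apply] at h
    obtain ⟨s, hs⟩ : ∃ s, polya k t n s * polyaStep (t + n) s r ≠ 0 := by
      by_contra hc
      push_neg at hc
      exact h (ENNReal.tsum_eq_zero.mpr hc)
    have h1 : polya k t n s ≠ 0 := fun h => by simp [h] at hs
    have h2 : polyaStep (t + n) s r ≠ 0 := fun h => by simp [h] at hs
    have := ih s h1
    rw [polyaStep_apply] at h2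
    have : r = s ∨ r = s + 1 := by
      by_contra hc
      push_neg at hc
      simp [hc.1, hc.2] at h2
    omega

lemma hmin {s t : ℕ} (h : s < t) : min ((s:ℝ≥0∞)/t) 1 = ENNReal.ofReal ((s:ℝ)/t) := by
  have ht : (0:ℝ) < t := by exact_mod_cast Nat.pos_of_ne_zero (by omega)
  rw [ENNReal.ofReal_div_of_pos ht, ENNReal.ofReal_natCast, ENNReal.ofReal_natCast]
  rw [min_eq_left]
  apply ENNReal.div_le_of_le_mul
  simpa using (Nat.cast_le (α := ℝ≥0∞)).2 h.le

lemma hmin' {s t : ℕ} (h : s < t) :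
    1 - min ((s:ℝ≥0∞)/t) 1 = ENNReal.ofReal (((t:ℝ)-s)/t) := by
  have ht : (0:ℝ) < t := by exact_mod_cast Nat.pos_of_ne_zero (by omega)
  rw [hmin h, ← ENNReal.ofReal_one, ← ENNReal.ofReal_sub _ (by positivity)]
  congr 1
  field_simp

lemma polya_mass (κ μ : ℕ) : ∀ n j d, n = j + d →
    polya (κ+1) (κ+μ+2) n (κ+1+j)
      = ENNReal.ofReal ((n.choose j : ℝ) * ((κ+1).ascFactorial j) * ((μ+1).ascFactorial d)
          / ((κ+μ+2).ascFactorial n)) := by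
  intro n
  induction n with
  | zero =>
    intro j d h
    obtain ⟨rfl, rfl⟩ : j = 0 ∧ d = 0 := by omega
    simp [polya, PMF.pure_apply]
  | succ n ih =>
    intro j d h
    have hL : (0:ℝ) < (κ+μ+2).ascFactorial n := by
      exact_mod_cast Nat.ascFactorial_pos (κ+μ+1) n
    have hL' : (0:ℝ) < (κ+μ+2).ascFactorial (n+1) := by
      exact_mod_cast Nat.ascFactorial_pos (κ+μ+1) (n+1)
    have hc : (0:ℝ) < (κ+μ+2+n : ℕ) := by positivity
    rw [polya_rec _ _ _ _ (by omega)]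
    match j, d, h with
    | 0, d, h =>
      have hd : d = n + 1 := by omega
      subst hd
      have h0 : polya (κ+1) (κ+μ+2) n (κ+1+0-1) = 0 := by
        by_contra hc0
        have := polya_support n _ hc0
        omega
      rw [h0, zero_mul, zero_add, ih 0 n (by omega),
        show ((κ+1+0 : ℕ) : ℝ≥0∞) = ((κ+1 : ℕ) : ℝ≥0∞) by norm_num,
        hmin' (show κ+1 < κ+μ+2+n by omega),
        ← ENNReal.ofReal_mul (by positivity)]
      congr 1
      rw [Nat.ascFactorial_succ, Nat.ascFactorial_succ]
      push_cast
      field_simp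
      simp only [Nat.choose_zero_right, Nat.cast_one]; ring
    | (i+1), 0, h =>
      have hn : n = i := by omega
      subst hn
      have h0 : polya (κ+1) (κ+μ+2) n (κ+1+(n+1)) = 0 := by
        by_contra hc0
        have := polya_support n _ hc0
        omega
      rw [h0, zero_mul, add_zero,
        show κ+1+(n+1)-1 = κ+1+n by omega, ih n 0 rfl,
        hmin (show κ+1+n < κ+μ+2+n by omega),
        ← ENNReal.ofReal_mul (by positivity)]
      congr 1
      rw [Nat.ascFactorial_succ, Nat.ascFactorial_succ]
      push_cast
      simp [Nat.choose_self]
      field_simp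
    | (i+1), (e+1), h =>
      have hn : n = i + e + 1 := by omega
      subst hn
      rw [show κ+1+(i+1)-1 = κ+1+i by omega,
        ih i (e+1) (by omega), ih (i+1) e (by omega),
        hmin (show κ+1+i < κ+μ+2+(i+e+1) by omega),
        hmin' (show κ+1+(i+1) < κ+μ+2+(i+e+1) by omega),
        ← ENNReal.ofReal_mul (by positivity),
        ← ENNReal.ofReal_mul (by positivity)]
      have hsub : (0:ℝ) ≤ ((κ+μ+2+(i+e+1) : ℕ) : ℝ) - ((κ+1+(i+1) : ℕ) : ℝ) := by
        rw [sub_nonneg]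
        exact_mod_cast (by omega : κ+1+(i+1) ≤ κ+μ+2+(i+e+1))
      rw [← ENNReal.ofReal_add (by positivity)
        (mul_nonneg (by positivity) (div_nonneg hsub (by positivity)))]
      congr 1
      rw [show (κ+1).ascFactorial (i+1) = (κ+1+i) * (κ+1).ascFactorial i from Nat.ascFactorial_succ,
        show (μ+1).ascFactorial (e+1) = (μ+1+e) * (μ+1).ascFactorial e from Nat.ascFactorial_succ,
        show (κ+μ+2).ascFactorial (i+e+1+1) = (κ+μ+2+(i+e+1)) * (κ+μ+2).ascFactorial (i+e+1)
          from Nat.ascFactorial_succ,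
        Nat.choose_succ_succ (i+e+1) i]
      push_cast
      field_simp
      ring

lemma asc_prod (n k : ℕ) : n.ascFactorial k = ∏ j ∈ Finset.range k, (n + j) := by
  induction k with
  | zero => simp
  | succ k ih => rw [Finset.prod_range_succ, ← ih, Nat.ascFactorial_succ, mul_comm]

lemma integral_Ioo_pow_mul_pow (a b : ℕ) :
    ∫ x in Set.Ioo (0:ℝ) 1, x^a * (1-x)^b
      = (a.factorial * b.factorial : ℝ) / (a+b+1).factorial := by
  have key : Complex.betaIntegral (a+1) (b+1)
      = ((b.factorial : ℂ)) / ∏ j ∈ Finset.range (b+1), ((a:ℂ)+1+j) := by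
    have := Complex.betaIntegral_eval_nat_add_one_right
      (u := (a:ℂ)+1) (by simp; positivity) b
    simpa using this
  have prodeq : ∏ j ∈ Finset.range (b+1), ((a:ℂ)+1+j)
      = ((a+1).ascFactorial (b+1) : ℂ) := by
    rw [asc_prod]
    push_cast
    rfl
  have hre : Complex.betaIntegral (a+1) (b+1)
      = ((∫ x in (0:ℝ)..1, x^a * (1-x)^b : ℝ) : ℂ) := by
    rw [Complex.betaIntegral, ← intervalIntegral.integral_ofReal]
    apply intervalIntegral.integral_congr
    intro x _
    push_cast
    rw [show ((a:ℂ)+1-1) = ((a:ℕ):ℂ) by push_cast; ring,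
      show ((b:ℂ)+1-1) = ((b:ℕ):ℂ) by push_cast; ring,
      Complex.cpow_natCast, Complex.cpow_natCast]
  have hasc : (a.factorial * (a+1).ascFactorial (b+1) : ℕ) = (a+b+1).factorial := by
    rw [Nat.factorial_mul_ascFactorial, ← Nat.add_assoc]
  have hreal : (∫ x in (0:ℝ)..1, x^a * (1-x)^b)
      = (a.factorial * b.factorial : ℝ) / (a+b+1).factorial := by
    have := hre.symm.trans (key.trans (by rw [prodeq]))
    have h2 : ((∫ x in (0:ℝ)..1, x^a * (1-x)^b : ℝ) : ℂ)
        = (((b.factorial : ℝ) / ((a+1).ascFactorial (b+1) : ℝ) : ℝ) : ℂ) := by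
      rw [this]; push_cast; ring
    have h3 := Complex.ofReal_inj.mp h2
    rw [h3]
    have hne : ((a+1).ascFactorial (b+1) : ℝ) ≠ 0 := by
      exact_mod_cast (Nat.ascFactorial_pos a (b+1)).ne'
    have hfac : (a.factorial : ℝ) * ((a+1).ascFactorial (b+1) : ℝ) = ((a+b+1).factorial : ℝ) := by
      exact_mod_cast congrArg (Nat.cast (R := ℝ)) hasc
    field_simp
    nlinarith [hfac]
  rw [← MeasureTheory.integral_Ioc_eq_integral_Ioo, ← intervalIntegral.integral_of_le
    (by norm_num : (0:ℝ) ≤ 1), hreal]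

noncomputable def rho (κ μ : ℕ) (x : ℝ) : ℝ :=
  ((κ+μ+1).factorial : ℝ) / ((κ.factorial : ℝ) * (μ.factorial : ℝ)) * x ^ κ * (1-x) ^ μ

lemma rho_cont (κ μ : ℕ) : Continuous (rho κ μ) := by
  unfold rho; continuity

lemma rho_nonneg (κ μ : ℕ) {x : ℝ} (hx : x ∈ Set.Ioo (0:ℝ) 1) : 0 ≤ rho κ μ x := by
  obtain ⟨h1, h2⟩ := hx
  unfold rho
  have : (0:ℝ) ≤ 1 - x := by linarith
  positivity

lemma betaMeasure_eq (κ μ : ℕ) :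
    betaMeasure (κ+1) (μ+1)
      = (volume.restrict (Set.Ioo (0 : ℝ) 1)).withDensity
          fun x => ENNReal.ofReal (rho κ μ x) := by
  unfold betaMeasure rho
  congr 1
  funext x
  rw [show κ+1+(μ+1)-1 = κ+μ+1 by omega, show κ+1-1 = κ by omega, show μ+1-1 = μ by omega]

lemma betaMeasure_integral (κ μ : ℕ) (g : ℝ → ℝ) :
    ∫ x, g x ∂betaMeasure (κ+1) (μ+1) = ∫ x in Set.Ioo (0:ℝ) 1, rho κ μ x * g x := by
  rw [betaMeasure_eq]
  have hmeas : Measurable fun x => (rho κ μ x).toNNReal :=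
    (rho_cont κ μ).measurable.real_toNNReal
  have : (fun x => ENNReal.ofReal (rho κ μ x))
      = fun x => ((rho κ μ x).toNNReal : ℝ≥0∞) := rfl
  rw [this, integral_withDensity_eq_integral_smul hmeas]
  apply setIntegral_congr_fun measurableSet_Ioo
  intro x hx
  simp only [NNReal.smul_def, smul_eq_mul]
  rw [Real.coe_toNNReal _ (rho_nonneg κ μ hx)]

lemma cont_integrableOn {g : ℝ → ℝ} (hg : Continuous g) :
    IntegrableOn g (Set.Ioo (0:ℝ) 1) :=
  (hg.integrableOn_Icc (a := 0) (b := 1)).mono_set Set.Ioo_subset_Icc_self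

lemma rho_prob (κ μ : ℕ) : ∫ x in Set.Ioo (0:ℝ) 1, rho κ μ x = 1 := by
  unfold rho
  rw [MeasureTheory.integral_congr_ae (g := fun x =>
      (((κ+μ+1).factorial : ℝ) / ((κ.factorial : ℝ) * (μ.factorial : ℝ))) * (x^κ * (1-x)^μ))
      (Filter.Eventually.of_forall fun x => by ring),
    MeasureTheory.integral_const_mul, integral_Ioo_pow_mul_pow]
  have h1 : (0:ℝ) < (κ.factorial : ℝ) := by exact_mod_cast κ.factorial_pos
  have h2 : (0:ℝ) < (μ.factorial : ℝ) := by exact_mod_cast μ.factorial_pos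
  have h3 : (0:ℝ) < ((κ+μ+1).factorial : ℝ) := by exact_mod_cast (κ+μ+1).factorial_pos
  field_simp

lemma polya_mass_int (κ μ : ℕ) (n j d : ℕ) (h : n = j + d) :
    ((polya (κ+1) (κ+μ+2) n (κ+1+j)).toReal : ℝ)
      = ∫ x in Set.Ioo (0:ℝ) 1, rho κ μ x * ((n.choose j : ℝ) * x^j * (1-x)^d) := by
  have hW : (0:ℝ) ≤ (n.choose j : ℝ) * ((κ+1).ascFactorial j) * ((μ+1).ascFactorial d)
      / ((κ+μ+2).ascFactorial n) := by positivity
  rw [polya_mass κ μ n j d h, ENNReal.toReal_ofReal hW]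
  rw [MeasureTheory.integral_congr_ae (g := fun x =>
      (((κ+μ+1).factorial : ℝ) / ((κ.factorial : ℝ) * (μ.factorial : ℝ)) * (n.choose j : ℝ))
        * (x^(κ+j) * (1-x)^(μ+d)))
      (Filter.Eventually.of_forall fun x => by unfold rho; simp only [pow_add]; ring),
    MeasureTheory.integral_const_mul, integral_Ioo_pow_mul_pow]
  have e1 : (κ.factorial : ℝ) * ((κ+1).ascFactorial j : ℝ) = ((κ+j).factorial : ℝ) := by
    exact_mod_cast congrArg (Nat.cast (R := ℝ)) (Nat.factorial_mul_ascFactorial κ j)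
  have e2 : (μ.factorial : ℝ) * ((μ+1).ascFactorial d : ℝ) = ((μ+d).factorial : ℝ) := by
    exact_mod_cast congrArg (Nat.cast (R := ℝ)) (Nat.factorial_mul_ascFactorial μ d)
  have e3 : ((κ+μ+1).factorial : ℝ) * ((κ+μ+2).ascFactorial n : ℝ)
      = ((κ+μ+1+n).factorial : ℝ) := by
    exact_mod_cast congrArg (Nat.cast (R := ℝ)) (Nat.factorial_mul_ascFactorial (κ+μ+1) n)
  rw [show κ+j+(μ+d)+1 = κ+μ+1+n by omega, ← e1, ← e2, ← e3]
  have h1 : (0:ℝ) < (κ.factorial : ℝ) := by exact_mod_cast κ.factorial_pos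
  have h2 : (0:ℝ) < (μ.factorial : ℝ) := by exact_mod_cast μ.factorial_pos
  have h3 : (0:ℝ) < ((κ+μ+1).factorial : ℝ) := by exact_mod_cast (κ+μ+1).factorial_pos
  have h4 : (0:ℝ) < ((κ+1).ascFactorial j : ℝ) := by exact_mod_cast Nat.ascFactorial_pos κ j
  have h5 : (0:ℝ) < ((μ+1).ascFactorial d : ℝ) := by exact_mod_cast Nat.ascFactorial_pos μ d
  have h6 : (0:ℝ) < ((κ+μ+2).ascFactorial n : ℝ) := by
    exact_mod_cast Nat.ascFactorial_pos (κ+μ+1) n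
  field_simp

lemma polya_integral (κ μ n : ℕ) (F : ℕ → ℝ) (C : ℝ) (hF : ∀ r, |F r| ≤ C) :
    ∫ r, F r ∂(polya (κ+1) (κ+μ+2) n).toMeasure
      = ∑ j ∈ Finset.range (n+1), (polya (κ+1) (κ+μ+2) n (κ+1+j)).toReal * F (κ+1+j) := by
  set p := polya (κ+1) (κ+μ+2) n with hp
  have hint : Integrable F p.toMeasure := by
    refine Integrable.mono' (integrable_const C) ?_ (Filter.Eventually.of_forall fun r => ?_)
    · exact (measurable_of_countable F).aestronglyMeasurable
    · simpa using hF r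
  rw [PMF.integral_eq_tsum p F hint]
  rw [tsum_eq_sum (s := Finset.image (fun j => κ+1+j) (Finset.range (n+1))) ?_]
  · rw [Finset.sum_image (by intro a _ b _ h; simp only at h; omega)]
    simp [smul_eq_mul]
  · intro r hr
    have : p r = 0 := by
      by_contra hc
      have := polya_support n r hc
      apply hr
      simp only [Finset.mem_image, Finset.mem_range]
      exact ⟨r - (κ+1), by omega, by omega⟩
    simp [this]

noncomputable def polyaG (κ μ : ℕ) (f : ℝ → ℝ) (n : ℕ) (x : ℝ) : ℝ :=
  ∑ j ∈ Finset.range (n+1), (n.choose j : ℝ) * x^j * (1-x)^(n-j)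
    * f (((κ+1+j : ℕ) : ℝ)/(((κ+μ+2 : ℕ):ℝ) + (n:ℝ)))

lemma polyaG_cont (κ μ : ℕ) (f : ℝ → ℝ) (n : ℕ) : Continuous (polyaG κ μ f n) := by
  unfold polyaG
  apply continuous_finset_sum
  intro j _
  continuity

lemma main_tendsto (κ μ : ℕ) (f : BoundedContinuousFunction ℝ ℝ) :
    Tendsto (fun n => ∫ x in Set.Ioo (0:ℝ) 1, rho κ μ x * polyaG κ μ (⇑f) n x)
      atTop (nhds (∫ x in Set.Ioo (0:ℝ) 1, rho κ μ x * f x)) := by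
  classical
  set g : C(I, ℝ) := f.toContinuousMap.comp ⟨Subtype.val, continuous_subtype_val⟩ with hg
  have hgapp : ∀ y : I, g y = f (y : ℝ) := fun y => rfl
  have hgu : UniformContinuous g := CompactSpace.uniformContinuous_of_continuous g.continuous
  rw [Metric.tendsto_atTop]
  intro ε hε
  have hε3 : 0 < ε/3 := by linarith
  obtain ⟨δ, hδpos, hδ⟩ := Metric.uniformContinuous_iff.mp hgu (ε/3) hε3
  set L : ℝ := ((κ+μ+2 : ℕ) : ℝ) with hL
  have hLpos : (0:ℝ) < L := by positivity
  have EV1 : ∀ᶠ n : ℕ in atTop, L/(L+n) < δ := by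
    have h0 : Tendsto (fun n : ℕ => L/(L+n)) atTop (nhds 0) := by
      apply Tendsto.div_atTop (tendsto_const_nhds)
      exact tendsto_atTop_add_const_left _ L tendsto_natCast_atTop_atTop
    have := h0.eventually (eventually_lt_nhds hδpos)
    simpa using this
  have EV2 : ∀ᶠ n : ℕ in atTop, ‖bernsteinApproximation n g - g‖ < ε/3 := by
    have := (bernsteinApproximation_uniform g).eventually
      (Metric.ball_mem_nhds g hε3)
    simpa [Metric.mem_ball, dist_eq_norm] using this
  have EV3 : ∀ᶠ n : ℕ in atTop, 1 ≤ n := eventually_ge_atTop 1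
  obtain ⟨N, hN⟩ := eventually_atTop.mp ((EV1.and EV2).and EV3)
  refine ⟨N, fun n hn => ?_⟩
  obtain ⟨⟨hδn, hBn⟩, hn1⟩ := hN n hn
  have hnn : (0:ℝ) < (n:ℝ) := by exact_mod_cast hn1
  have hLn : (0:ℝ) < L + n := by positivity
  -- pointwise bound
  have hpt : ∀ x ∈ Set.Ioo (0:ℝ) 1, |polyaG κ μ (⇑f) n x - f x| ≤ 2*(ε/3) := by
    intro x hx
    set X : I := ⟨x, ⟨hx.1.le, hx.2.le⟩⟩ with hX
    have hdiff : ∀ k : Fin (n+1),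
        |f (((κ+1+(k:ℕ) : ℕ) : ℝ)/(((κ+μ+2 : ℕ):ℝ) + (n:ℝ))) - g (bernstein.z k)| ≤ ε/3 := by
      intro k
      have hk : (k : ℕ) ≤ n := Nat.lt_succ_iff.mp k.2
      have hkr : ((k:ℕ) : ℝ) ≤ (n:ℝ) := by exact_mod_cast hk
      set a : ℝ := ((κ+1+(k:ℕ) : ℕ) : ℝ)/(L + (n:ℝ)) with ha
      have hanum : ((κ+1+(k:ℕ) : ℕ) : ℝ) ≤ L + n := by
        push_cast [hL]
        linarith
      have hamem : a ∈ I := by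
        constructor
        · apply div_nonneg (by positivity) hLn.le
        · rw [div_le_one hLn]; exact hanum
      have hzval : ((bernstein.z k : I) : ℝ) = ((k:ℕ):ℝ)/(n:ℝ) := rfl
      have hdist : dist (⟨a, hamem⟩ : I) (bernstein.z k) < δ := by
        rw [Subtype.dist_eq, Real.dist_eq, hzval]
        have e : a - ((k:ℕ):ℝ)/(n:ℝ)
            = (((κ+1:ℕ):ℝ)*(n:ℝ) - ((k:ℕ):ℝ)*L)/((L+(n:ℝ))*(n:ℝ)) := by
          rw [ha]
          push_cast [hL]
          field_simp
          ring
        rw [e, abs_div, abs_of_pos (mul_pos hLn hnn)]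
        have hKL : ((κ+1:ℕ):ℝ) ≤ L := by rw [hL]; push_cast; linarith
        have hnum : |((κ+1:ℕ):ℝ)*(n:ℝ) - ((k:ℕ):ℝ)*L| ≤ (n:ℝ)*L := by
          rw [abs_le]
          constructor
          · nlinarith
          · nlinarith [Nat.cast_nonneg (α := ℝ) (k:ℕ)]
        calc |((κ+1:ℕ):ℝ)*(n:ℝ) - ((k:ℕ):ℝ)*L| / ((L+(n:ℝ))*(n:ℝ))
            ≤ ((n:ℝ)*L) / ((L+(n:ℝ))*(n:ℝ)) := by gcongr
          _ = L/(L+(n:ℝ)) := by field_simp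
          _ < δ := hδn
      have := hδ hdist
      rw [Real.dist_eq] at this
      have hga : g ⟨a, hamem⟩ = f a := rfl
      rw [hga] at this
      exact le_of_lt (by simpa [ha, hL] using this)
    -- compare polyaG with bernstein approximation
    have hGb : |polyaG κ μ (⇑f) n x - bernsteinApproximation n g X| ≤ ε/3 := by
      have hGsum : polyaG κ μ (⇑f) n x
          = ∑ k : Fin (n+1), bernstein n k X
              * f (((κ+1+(k:ℕ) : ℕ) : ℝ)/(((κ+μ+2 : ℕ):ℝ) + (n:ℝ))) := by
        rw [polyaG, Finset.sum_range]
        apply Finset.sum_congr rfl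
        intro k _
        rw [bernstein_apply]
      rw [hGsum, bernsteinApproximation.apply]
      rw [← Finset.sum_sub_distrib]
      have : ∀ k : Fin (n+1),
          bernstein n k X * f (((κ+1+(k:ℕ) : ℕ) : ℝ)/(((κ+μ+2 : ℕ):ℝ) + (n:ℝ)))
            - bernstein n k X • g (bernstein.z k)
          = bernstein n k X
            * (f (((κ+1+(k:ℕ) : ℕ) : ℝ)/(((κ+μ+2 : ℕ):ℝ) + (n:ℝ))) - g (bernstein.z k)) := by
        intro k; rw [smul_eq_mul]; ring
      rw [Finset.sum_congr rfl fun k _ => this k]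
      calc |∑ k : Fin (n+1), bernstein n k X * (f _ - g (bernstein.z k))|
          ≤ ∑ k : Fin (n+1), |bernstein n k X * (f _ - g (bernstein.z k))| :=
            Finset.abs_sum_le_sum_abs _ _
        _ ≤ ∑ k : Fin (n+1), bernstein n k X * (ε/3) := by
            apply Finset.sum_le_sum
            intro k _
            rw [abs_mul, abs_of_nonneg bernstein_nonneg]
            exact mul_le_mul_of_nonneg_left (hdiff k) bernstein_nonneg
        _ = (∑ k : Fin (n+1), bernstein n k X) * (ε/3) := by rw [Finset.sum_mul]
        _ = ε/3 := by rw [bernstein.probability n X, one_mul]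
    have hBf : |bernsteinApproximation n g X - f x| ≤ ε/3 := by
      have h1 : bernsteinApproximation n g X - f x = (bernsteinApproximation n g - g) X := by
        rw [ContinuousMap.sub_apply]
        congr 1
      rw [h1]
      calc |(bernsteinApproximation n g - g) X| ≤ ‖bernsteinApproximation n g - g‖ :=
            (bernsteinApproximation n g - g).norm_coe_le_norm X
        _ ≤ ε/3 := hBn.le
    calc |polyaG κ μ (⇑f) n x - f x|
        ≤ |polyaG κ μ (⇑f) n x - bernsteinApproximation n g X|
          + |bernsteinApproximation n g X - f x| := abs_sub_le _ _ _
      _ ≤ ε/3 + ε/3 := add_le_add hGb hBf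
      _ = 2*(ε/3) := by ring
  -- integral bound
  have hint1 : IntegrableOn (fun x => rho κ μ x * polyaG κ μ (⇑f) n x) (Set.Ioo (0:ℝ) 1) :=
    cont_integrableOn ((rho_cont κ μ).mul (polyaG_cont κ μ (⇑f) n))
  have hint2 : IntegrableOn (fun x => rho κ μ x * f x) (Set.Ioo (0:ℝ) 1) :=
    cont_integrableOn ((rho_cont κ μ).mul f.continuous)
  rw [Real.dist_eq, ← integral_sub hint1 hint2]
  have hbound : ‖∫ x in Set.Ioo (0:ℝ) 1,
      (rho κ μ x * polyaG κ μ (⇑f) n x - rho κ μ x * f x)‖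
      ≤ ∫ x in Set.Ioo (0:ℝ) 1, rho κ μ x * (2*(ε/3)) := by
    apply norm_integral_le_of_norm_le (cont_integrableOn ((rho_cont κ μ).mul continuous_const))
    rw [ae_restrict_iff' measurableSet_Ioo]
    apply Filter.Eventually.of_forall
    intro x hx
    rw [show rho κ μ x * polyaG κ μ (⇑f) n x - rho κ μ x * f x
      = rho κ μ x * (polyaG κ μ (⇑f) n x - f x) by ring]
    rw [Real.norm_eq_abs, abs_mul, abs_of_nonneg (rho_nonneg κ μ hx)]
    exact mul_le_mul_of_nonneg_left (hpt x hx) (rho_nonneg κ μ hx)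
  have h2 : ∫ x in Set.Ioo (0:ℝ) 1, rho κ μ x * (2*(ε/3)) = 2*(ε/3) := by
    rw [integral_mul_const, rho_prob, one_mul]
  rw [Real.norm_eq_abs] at hbound
  calc |∫ x in Set.Ioo (0:ℝ) 1, (rho κ μ x * polyaG κ μ (⇑f) n x - rho κ μ x * f x)|
      ≤ 2*(ε/3) := by rw [← h2]; exact hbound
    _ < ε := by linarith

lemma S_eq (κ μ n : ℕ) (f : ℝ → ℝ) :
    ∑ j ∈ Finset.range (n+1), (polya (κ+1) (κ+μ+2) n (κ+1+j)).toReal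
        * f (((κ+1+j : ℕ) : ℝ)/(((κ+μ+2 : ℕ):ℝ) + (n:ℝ)))
      = ∫ x in Set.Ioo (0:ℝ) 1, rho κ μ x * polyaG κ μ f n x := by
  have hterm : ∀ j ∈ Finset.range (n+1),
      (polya (κ+1) (κ+μ+2) n (κ+1+j)).toReal
          * f (((κ+1+j : ℕ) : ℝ)/(((κ+μ+2 : ℕ):ℝ) + (n:ℝ)))
        = ∫ x in Set.Ioo (0:ℝ) 1,
            rho κ μ x * ((n.choose j : ℝ) * x^j * (1-x)^(n-j)
              * f (((κ+1+j : ℕ) : ℝ)/(((κ+μ+2 : ℕ):ℝ) + (n:ℝ)))) := by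
    intro j hj
    rw [Finset.mem_range] at hj
    rw [polya_mass_int κ μ n j (n-j) (by omega), ← integral_mul_const]
    apply setIntegral_congr_fun measurableSet_Ioo
    intro x _
    ring
  rw [Finset.sum_congr rfl hterm, ← integral_finset_sum]
  · apply setIntegral_congr_fun measurableSet_Ioo
    intro x _
    simp only [polyaG, Finset.mul_sum]
  · intro j _
    apply cont_integrableOn
    exact (rho_cont κ μ).mul (by continuity)

/-- In a standard Pólya urn initialized with `k` red and `ℓ - k` blue balls
(`1 ≤ k ≤ ℓ - 1`), the proportion of red balls after `n` draws (out of `ℓ + n` balls in total)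
converges in distribution, as `n → ∞`, to a `Beta(k, ℓ-k)` random variable. -/
theorem stmt2 (k ℓ : ℕ) (hk : 1 ≤ k) (hkℓ : k ≤ ℓ - 1) (hℓ : 2 ≤ ℓ)
    (f : BoundedContinuousFunction ℝ ℝ) :
    Tendsto (fun n => ∫ r : ℕ, f ((r : ℝ) / ((ℓ : ℝ) + n)) ∂(polya k ℓ n).toMeasure)
      atTop (nhds (∫ x, f x ∂betaMeasure k (ℓ - k))) := by
  obtain ⟨κ, rfl⟩ : ∃ κ, k = κ + 1 := ⟨k - 1, by omega⟩
  obtain ⟨μ, rfl⟩ : ∃ μ, ℓ = κ + μ + 2 := ⟨ℓ - κ - 2, by omega⟩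
  rw [show (κ + μ + 2) - (κ + 1) = μ + 1 by omega, betaMeasure_integral]
  refine Tendsto.congr (fun n => ?_) (main_tendsto κ μ f)
  rw [← S_eq]
  rw [polya_integral κ μ n (fun r => f ((r : ℝ) / (((κ + μ + 2 : ℕ) : ℝ) + n))) ‖f‖
    (fun r => by simpa [Real.norm_eq_abs] using f.norm_coe_le_norm _)]
end

section
/- Let $X \sim$ Beta$(\gamma\ell, \ell - \gamma\ell)$ with $\gamma\ell$ a positive integer and $\gamma \in (0,1)$, and let $t = \gamma/e^2$. Then $\mathbb{P}\{X \le t\} \le (t\ell)^{\gamma\ell}/(\gamma\ell)! \le (e\ell t/(\gamma\ell))^{\gamma\ell} \le e^{-\gamma\ell}$. -/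
open MeasureTheory

/-- Let `X ∼ Beta(γℓ, ℓ - γℓ)` where `k = γℓ` is a positive integer,
`γ = k/ℓ ∈ (0,1)`, and let `t = γ/e²`.  Then
`P{X ≤ t} ≤ (tℓ)^(γℓ)/(γℓ)! ≤ (eℓt/(γℓ))^(γℓ) ≤ e^{-γℓ}`. -/
theorem stmt4 (k ℓ : ℕ) (hk : 1 ≤ k) (hkℓ : k < ℓ) :
    betaMeasure k (ℓ - k) {x | x ≤ ((k : ℝ) / ℓ) / Real.exp 2} ≤
        ENNReal.ofReal (((((k : ℝ) / ℓ) / Real.exp 2) * ℓ) ^ k / (Nat.factorial k : ℝ)) ∧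
    ((((k : ℝ) / ℓ) / Real.exp 2) * ℓ) ^ k / (Nat.factorial k : ℝ) ≤
        (Real.exp 1 * ℓ * (((k : ℝ) / ℓ) / Real.exp 2) / k) ^ k ∧
    (Real.exp 1 * ℓ * (((k : ℝ) / ℓ) / Real.exp 2) / k) ^ k ≤ Real.exp (-(k : ℝ)) := by
  have hk0 : (0 : ℝ) < k := by exact_mod_cast hk
  have hℓ0 : (0 : ℝ) < ℓ := by exact_mod_cast Nat.lt_of_lt_of_le (Nat.zero_lt_of_lt hkℓ) le_rfl
  have he2 : (1 : ℝ) < Real.exp 2 := by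
    have := Real.add_one_le_exp (2 : ℝ); linarith
  set t : ℝ := ((k : ℝ) / ℓ) / Real.exp 2 with ht_def
  have ht0 : 0 < t := div_pos (div_pos hk0 hℓ0) (Real.exp_pos 2)
  have htl : t * ℓ = k / Real.exp 2 := by
    field_simp [ht_def]; rw [ht_def]; field_simp
  have ht1 : t < 1 := by
    have hkl : (k : ℝ) / ℓ < 1 := by
      rw [div_lt_one hℓ0]; exact_mod_cast hkℓ
    have : t ≤ (k : ℝ) / ℓ := by
      rw [ht_def, div_le_iff₀ (by positivity)]
      nlinarith [div_pos hk0 hℓ0]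
    linarith
  -- the middle expression equals exp (-1)
  have hmid : Real.exp 1 * ℓ * t / k = Real.exp (-1) := by
    rw [ht_def]
    rw [show Real.exp 1 * (ℓ:ℝ) * ((k / ℓ) / Real.exp 2) / k
        = Real.exp 1 / Real.exp 2 by field_simp]
    rw [← Real.exp_sub]; norm_num
  have hmidpow : (Real.exp 1 * ℓ * t / k) ^ k = Real.exp (-(k:ℝ)) := by
    rw [hmid, ← Real.exp_nat_mul]
    ring_nf
  constructor
  · -- the measure bound
    have hmeasIic : MeasurableSet {x : ℝ | x ≤ t} := measurableSet_Iic
    set C : ℝ := (Nat.factorial (k + (ℓ - k) - 1) : ℝ) /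
        (Nat.factorial (k - 1) * Nat.factorial (ℓ - k - 1)) with hC_def
    have hC0 : 0 ≤ C := by positivity
    have hsub : {x : ℝ | x ≤ t} ∩ Set.Ioo 0 1 ⊆ Set.Ioc 0 t := by
      rintro x ⟨hx1, hx2, _⟩
      exact ⟨hx2, hx1⟩
    calc betaMeasure k (ℓ - k) {x | x ≤ t}
        = ∫⁻ x in {x : ℝ | x ≤ t} ∩ Set.Ioo 0 1, ENNReal.ofReal
            (C * x ^ (k - 1) * (1 - x) ^ (ℓ - k - 1)) := by
          rw [betaMeasure, withDensity_apply _ hmeasIic, Measure.restrict_restrict hmeasIic]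
      _ ≤ ∫⁻ x in Set.Ioc 0 t, ENNReal.ofReal
            (C * x ^ (k - 1) * (1 - x) ^ (ℓ - k - 1)) := by
          exact lintegral_mono' (Measure.restrict_mono hsub le_rfl) le_rfl
      _ ≤ ∫⁻ x in Set.Ioc 0 t, ENNReal.ofReal (C * x ^ (k - 1)) := by
          refine setLIntegral_mono (by fun_prop) (fun x hx => ?_)
          refine ENNReal.ofReal_le_ofReal ?_
          have hx0 : 0 < x := hx.1
          have hx1 : x ≤ t := hx.2
          have h1x : 0 ≤ 1 - x := by linarith
          have h1x' : 1 - x ≤ 1 := by linarith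
          have hpow : (1 - x) ^ (ℓ - k - 1) ≤ 1 := pow_le_one₀ h1x h1x'
          have hnn : 0 ≤ C * x ^ (k - 1) := by positivity
          nlinarith
      _ = ENNReal.ofReal (∫ x in Set.Ioc (0:ℝ) t, C * x ^ (k - 1)) := by
          rw [← ofReal_integral_eq_lintegral_ofReal
            (show IntegrableOn (fun x : ℝ => C * x ^ (k - 1)) (Set.Ioc 0 t) volume from
              (continuous_const.mul (continuous_pow (k-1))).integrableOn_Ioc)
            ((ae_restrict_iff' measurableSet_Ioc).2 (Filter.Eventually.of_forall
              (fun x hx => by have := hx.1; positivity)))]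
      _ = ENNReal.ofReal (C * (t ^ k / k)) := by
          rw [← intervalIntegral.integral_of_le ht0.le, intervalIntegral.integral_const_mul,
            integral_pow]
          congr 1
          have hks : k - 1 + 1 = k := Nat.sub_add_cancel hk
          rw [hks, zero_pow (by omega), Nat.cast_sub hk]
          push_cast
          ring
      _ ≤ ENNReal.ofReal ((t * ℓ) ^ k / (Nat.factorial k : ℝ)) := by
          refine ENNReal.ofReal_le_ofReal ?_
          -- key combinatorial bound
          have hdf : (ℓ - k - 1).factorial * (ℓ - 1).descFactorial k = (ℓ - 1).factorial := by
            have h1 : k ≤ ℓ - 1 := by omega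
            have := Nat.factorial_mul_descFactorial h1
            rwa [show ℓ - 1 - k = ℓ - k - 1 by omega] at this
          have hdle : ((ℓ - 1).descFactorial k : ℝ) ≤ (ℓ : ℝ) ^ k := by
            calc ((ℓ - 1).descFactorial k : ℝ) ≤ ((ℓ - 1 : ℕ) : ℝ) ^ k := by
                  exact_mod_cast Nat.descFactorial_le_pow _ _
              _ ≤ (ℓ : ℝ) ^ k := by
                  gcongr
                  · exact_mod_cast Nat.sub_le ℓ 1
          have hCeq : C = ((ℓ - 1).descFactorial k : ℝ) / (Nat.factorial (k - 1) : ℝ) := by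
            rw [hC_def, show k + (ℓ - k) - 1 = ℓ - 1 by omega]
            rw [← hdf]
            push_cast
            field_simp
          have hkfact : (Nat.factorial k : ℝ) = k * Nat.factorial (k - 1) := by
            exact_mod_cast (Nat.mul_factorial_pred (by omega)).symm
          rw [hCeq, mul_pow, hkfact]
          rw [div_mul_eq_mul_div, div_le_div_iff₀ (by positivity) (by positivity)]
          have htk : (0:ℝ) < t ^ k := by positivity
          have hf0 : (0:ℝ) < (Nat.factorial (k-1) : ℝ) := by positivity
          calc ((ℓ - 1).descFactorial k : ℝ) * (t ^ k / k) * ((k:ℝ) * Nat.factorial (k - 1))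
              = ((ℓ - 1).descFactorial k : ℝ) * t ^ k * Nat.factorial (k - 1) := by
                field_simp
            _ ≤ (ℓ:ℝ) ^ k * t ^ k * Nat.factorial (k - 1) := by gcongr
            _ = t ^ k * (ℓ:ℝ) ^ k * Nat.factorial (k - 1) := by ring
  constructor
  · -- middle inequality
    rw [hmidpow, htl, div_pow, div_div]
    have hkey : (k:ℝ) ^ k / Nat.factorial k ≤ Real.exp (k:ℝ) :=
      Real.pow_div_factorial_le_exp _ (le_of_lt hk0) k
    have he2k : (Real.exp 2) ^ k = Real.exp (2 * k) := by
      rw [← Real.exp_nat_mul]; ring_nf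
    rw [he2k]
    rw [div_le_iff₀ (by positivity)]
    calc (k:ℝ) ^ k ≤ Real.exp (k:ℝ) * Nat.factorial k := by
          rw [← div_le_iff₀ (by positivity)] ; exact hkey
      _ = Real.exp (-(k:ℝ)) * (Real.exp (2*(k:ℝ)) * Nat.factorial k) := by
          rw [← mul_assoc, ← Real.exp_add]; ring_nf
  · rw [hmidpow]
end

section
/- With $X_t$ as above ($X_\ell = 0$ and $X_j - X_{j-1}$ independent Bernoulli$(1/j)$ for $j > \ell$), for all integers $m > \ell \ge 1$, $\mathbb{E}\big[ e^{\sum_{j=\ell+1}^m (X_j - X_{j-1} - 1/j)} \big] \le \frac{(m+2)^2}{\ell^2} e^{-\sum_{j=\ell+1}^m 1/j}$. -/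
open MeasureTheory ProbabilityTheory

lemma prod_telescope (ℓ m : ℕ) (h : ℓ ≤ m) :
    ∏ j ∈ Finset.Ioc ℓ m, (((j : ℝ) + 2) / j) =
      ((m : ℝ) + 1) * ((m : ℝ) + 2) / (((ℓ : ℝ) + 1) * ((ℓ : ℝ) + 2)) := by
  induction m with
  | zero => simp [Nat.le_zero.mp h]
  | succ n ih =>
    rcases Nat.lt_or_ge ℓ (n+1) with hlt | hge
    · have hln : ℓ ≤ n := Nat.lt_succ_iff.mp hlt
      rw [Finset.prod_Ioc_succ_top hln, ih hln]
      have h1 : ((n : ℝ) + 1) ≠ 0 := by positivity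
      have h2 : ((ℓ : ℝ) + 1) * ((ℓ : ℝ) + 2) ≠ 0 := by positivity
      push_cast
      field_simp
      ring
    · have : ℓ = n + 1 := le_antisymm h hge
      subst this
      rw [Finset.Ioc_self, Finset.prod_empty, eq_comm, div_eq_one_iff_eq (by positivity)]

/-- If `B j` (`ℓ < j ≤ m`) are independent Bernoulli(`1/j`) random variables,
then `E[exp(∑_{j=ℓ+1}^m (B j - 1/j))] ≤ ((m+2)²/ℓ²) · exp(-∑_{j=ℓ+1}^m 1/j)`. -/
theorem stmt7 {Ω : Type*} [MeasurableSpace Ω] (μ : Measure Ω) [IsProbabilityMeasure μ]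
    (ℓ m : ℕ) (hℓ : 1 ≤ ℓ) (hm : ℓ < m)
    (B : ℕ → Ω → ℝ) (hmeas : ∀ j, Measurable (B j))
    (hindep : iIndepFun B μ)
    (h01 : ∀ j ω, B j ω = 0 ∨ B j ω = 1)
    (hp : ∀ j, ℓ < j → j ≤ m → μ {ω | B j ω = 1} = ENNReal.ofReal (1 / (j : ℝ))) :
    ∫ ω, Real.exp (∑ j ∈ Finset.Ioc ℓ m, (B j ω - 1 / j)) ∂μ ≤
      ((m : ℝ) + 2) ^ 2 / (ℓ : ℝ) ^ 2 * Real.exp (-∑ j ∈ Finset.Ioc ℓ m, (1 : ℝ) / j) := by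
  set S : ℝ := ∑ j ∈ Finset.Ioc ℓ m, (1 : ℝ) / j with hS
  have hsplit : ∀ ω, Real.exp (∑ j ∈ Finset.Ioc ℓ m, (B j ω - 1 / j))
      = Real.exp (∑ j ∈ Finset.Ioc ℓ m, B j ω) * Real.exp (-S) := by
    intro ω
    rw [Finset.sum_sub_distrib, sub_eq_add_neg, Real.exp_add]
  simp_rw [hsplit]
  rw [integral_mul_const]
  have hmgf : ∫ ω, Real.exp (∑ j ∈ Finset.Ioc ℓ m, B j ω) ∂μ
      = mgf (∑ j ∈ Finset.Ioc ℓ m, B j) μ 1 := by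
    simp [mgf, Finset.sum_apply]
  rw [hmgf, hindep.mgf_sum hmeas]
  -- each mgf factor
  have hfac : ∀ j ∈ Finset.Ioc ℓ m, mgf (B j) μ 1 ≤ ((j : ℝ) + 2) / j := by
    intro j hj
    rw [Finset.mem_Ioc] at hj
    have hj0' : 0 < j := by omega
    have hj0 : (0 : ℝ) < j := by exact_mod_cast hj0'
    -- exp (B j ω) = 1 + (e-1) * B j ω
    have hexp : ∀ ω, Real.exp (1 * B j ω) = 1 + (Real.exp 1 - 1) * B j ω := by
      intro ω
      rcases h01 j ω with h0 | h1
      · simp [h0]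
      · simp [h1]
    -- B j as an indicator
    have hind : (B j) = Set.indicator {ω | B j ω = 1} (fun _ => (1 : ℝ)) := by
      funext ω
      rcases h01 j ω with h0 | h1
      · rw [h0, Set.indicator_of_notMem]
        simp [Set.mem_setOf_eq, h0]
      · rw [h1, Set.indicator_of_mem]
        exact h1
    have hmset : MeasurableSet {ω | B j ω = 1} := (hmeas j) (measurableSet_singleton 1)
    have hintB : ∫ ω, B j ω ∂μ = 1 / (j : ℝ) := by
      rw [show (fun ω => B j ω) = B j from rfl, hind,
        integral_indicator_const _ hmset, measureReal_def, hp j hj.1 hj.2, smul_eq_mul, mul_one,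
        ENNReal.toReal_ofReal (by positivity)]
    have hBint : Integrable (B j) μ := by
      refine Integrable.mono' (integrable_const 1) (hmeas j).aestronglyMeasurable
        (Filter.Eventually.of_forall fun ω => ?_)
      rcases h01 j ω with ha | ha <;> simp [ha]
    have : mgf (B j) μ 1 = 1 + (Real.exp 1 - 1) * (1 / (j : ℝ)) := by
      rw [mgf]
      simp_rw [hexp]
      rw [integral_add (integrable_const 1) (hBint.const_mul _), integral_const,
        integral_const_mul, hintB]
      simp
    rw [this]
    have he : Real.exp 1 - 1 ≤ 2 := by
      have := Real.exp_one_lt_d9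
      linarith
    have : 1 + (Real.exp 1 - 1) * (1 / (j : ℝ)) ≤ 1 + 2 * (1 / (j : ℝ)) := by
      have h1j : (0:ℝ) ≤ 1 / (j:ℝ) := by positivity
      nlinarith
    refine this.trans ?_
    rw [le_div_iff₀ hj0, add_mul, one_mul, mul_assoc, one_div_mul_cancel hj0.ne', mul_one]
  -- product bound
  have hprod : ∏ j ∈ Finset.Ioc ℓ m, mgf (B j) μ 1 ≤ ((m : ℝ) + 2) ^ 2 / (ℓ : ℝ) ^ 2 := by
    have h1 : ∏ j ∈ Finset.Ioc ℓ m, mgf (B j) μ 1 ≤ ∏ j ∈ Finset.Ioc ℓ m, (((j : ℝ) + 2) / j) := by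
      refine Finset.prod_le_prod (fun j hj => mgf_nonneg) hfac
    rw [prod_telescope ℓ m hm.le] at h1
    refine h1.trans ?_
    have hℓ0 : (0 : ℝ) < ℓ := by exact_mod_cast hℓ
    rw [div_le_div_iff₀ (by positivity) (by positivity)]
    nlinarith [sq_nonneg ((m:ℝ) + 2), sq_nonneg ((ℓ:ℝ))]
  exact mul_le_mul_of_nonneg_right hprod (Real.exp_nonneg _)
end

section
/- Let $X_m = \sum_{j=\ell+1}^m B_j$ where the $B_j$ are independent Bernoulli$(1/j)$ random variables. Then for any $\gamma\ell > 0$, $\mathbb{P}\{X_m > \gamma\ell\} \le \frac{(m+2)^2}{\ell^2 e^{\gamma\ell}}$. -/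
open MeasureTheory ProbabilityTheory

/-- Telescoping product `∏_{j=ℓ+1}^m (j+1)/j = (m+1)/(ℓ+1)`. -/
lemma telesc (ℓ : ℕ) : ∀ m : ℕ, ℓ ≤ m →
    ∏ j ∈ Finset.Ioc ℓ m, (((j : ℝ) + 1) / (j : ℝ)) = ((m : ℝ) + 1) / ((ℓ : ℝ) + 1) := by
  intro m
  induction m with
  | zero => intro h; interval_cases ℓ; simp
  | succ n ih =>
      intro h
      rcases Nat.lt_or_ge ℓ (n + 1) with hlt | hge
      · have hℓn : ℓ ≤ n := Nat.lt_succ_iff.mp hlt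
        rw [Finset.prod_Ioc_succ_top hℓn, ih hℓn]
        have hn1 : ((n : ℝ) + 1) ≠ 0 := by positivity
        have hl1 : ((ℓ : ℝ) + 1) ≠ 0 := by positivity
        push_cast
        field_simp
      · have : ℓ = n + 1 := le_antisymm h hge
        subst this
        rw [Finset.Ioc_self, Finset.prod_empty]
        rw [eq_comm, div_self (by positivity)]

/-- Let `X_m = ∑_{j=ℓ+1}^m B j` where the `B j` are independent
Bernoulli(`1/j`) random variables.  Then for any `γℓ > 0` (denoted `c` below),
`P{X_m > γℓ} ≤ (m+2)²/(ℓ² e^{γℓ})`. -/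
theorem stmt8 {Ω : Type*} [MeasurableSpace Ω] (μ : Measure Ω) [IsProbabilityMeasure μ]
    (ℓ m : ℕ) (hℓ : 1 ≤ ℓ) (hm : ℓ < m)
    (B : ℕ → Ω → ℝ) (hmeas : ∀ j, Measurable (B j))
    (hindep : iIndepFun B μ)
    (h01 : ∀ j ω, B j ω = 0 ∨ B j ω = 1)
    (hp : ∀ j, ℓ < j → j ≤ m → μ {ω | B j ω = 1} = ENNReal.ofReal (1 / (j : ℝ)))
    (c : ℝ) (hc : 0 < c) :
    μ {ω | c < ∑ j ∈ Finset.Ioc ℓ m, B j ω} ≤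
      ENNReal.ofReal (((m : ℝ) + 2) ^ 2 / ((ℓ : ℝ) ^ 2 * Real.exp c)) := by
  -- Integrability of each exp(1 * B j)
  have hint : ∀ j, Integrable (fun ω => Real.exp (1 * B j ω)) μ := by
    intro j
    refine (integrable_const (Real.exp 1)).mono'
      (((hmeas j).const_mul 1).exp.aestronglyMeasurable) (ae_of_all _ fun ω => ?_)
    rw [Real.norm_eq_abs, abs_of_nonneg (Real.exp_nonneg _)]
    apply Real.exp_le_exp.2
    rcases h01 j ω with h | h <;> simp [h]
  -- mgf of each B j at t = 1
  have hmgf : ∀ j, ℓ < j → j ≤ m →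
      mgf (B j) μ 1 = 1 + (Real.exp 1 - 1) * (1 / (j : ℝ)) := by
    intro j hj1 hj2
    have hjpos : (0 : ℝ) < j := by
      have : 0 < j := lt_of_le_of_lt (Nat.zero_le ℓ) hj1
      exact_mod_cast this
    have hBint : Integrable (B j) μ := by
      refine (integrable_const (1 : ℝ)).mono'
        (hmeas j).aestronglyMeasurable (ae_of_all _ fun ω => ?_)
      rcases h01 j ω with h | h <;> simp [h]
    have hrw : (fun ω => Real.exp (1 * B j ω))
        = fun ω => 1 + (Real.exp 1 - 1) * B j ω := by
      funext ω
      rcases h01 j ω with h | h <;> simp [h]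
    have hsmeas : MeasurableSet {ω | B j ω = 1} := by
      have : {ω | B j ω = 1} = B j ⁻¹' {1} := rfl
      rw [this]; exact (hmeas j) (measurableSet_singleton 1)
    have hind : B j = Set.indicator {ω | B j ω = 1} (fun _ => (1 : ℝ)) := by
      funext ω
      rcases h01 j ω with h | h
      · rw [Set.indicator_of_notMem]
        · exact h
        · simp [Set.mem_setOf_eq, h]
      · rw [Set.indicator_of_mem]
        · exact h
        · exact h
    have hEB : μ[B j] = 1 / (j : ℝ) := by
      rw [hind, integral_indicator_const (1 : ℝ) hsmeas, measureReal_def, hp j hj1 hj2]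
      rw [smul_eq_mul, mul_one, ENNReal.toReal_ofReal (by positivity)]
    rw [mgf, hrw]
    rw [integral_add (integrable_const 1) (hBint.const_mul _)]
    rw [integral_const, integral_const_mul, hEB]
    simp
  -- per-factor bound
  have hfac : ∀ j ∈ Finset.Ioc ℓ m, mgf (B j) μ 1 ≤ (((j : ℝ) + 1) / (j : ℝ)) ^ 2 := by
    intro j hj
    rw [Finset.mem_Ioc] at hj
    have hjpos : (1 : ℝ) ≤ j := by
      have : 1 ≤ j := le_trans hℓ hj.1.le
      exact_mod_cast this
    rw [hmgf j hj.1 hj.2]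
    have he : Real.exp 1 < 2.7182818286 := Real.exp_one_lt_d9
    have hj0 : (0 : ℝ) < j := lt_of_lt_of_le one_pos hjpos
    have h2 : 1 + (Real.exp 1 - 1) * (1 / (j : ℝ)) ≤ 1 + 2 * (1 / (j : ℝ)) := by
      have he2 : Real.exp 1 - 1 ≤ 2 := by nlinarith
      have := mul_le_mul_of_nonneg_right he2 (by positivity : (0:ℝ) ≤ 1 / (j : ℝ))
      linarith
    refine h2.trans ?_
    have hsq : (((j : ℝ) + 1) / (j : ℝ)) ^ 2 = 1 + 2 * (1 / (j : ℝ)) + (1 / (j : ℝ)) ^ 2 := by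
      field_simp
      ring
    rw [hsq]
    nlinarith [sq_nonneg (1 / (j : ℝ))]
  -- mgf of the sum
  have hsum : mgf (∑ j ∈ Finset.Ioc ℓ m, B j) μ 1 = ∏ j ∈ Finset.Ioc ℓ m, mgf (B j) μ 1 :=
    hindep.mgf_sum hmeas _
  have hprod : ∏ j ∈ Finset.Ioc ℓ m, mgf (B j) μ 1
      ≤ (((m : ℝ) + 1) / ((ℓ : ℝ) + 1)) ^ 2 := by
    calc ∏ j ∈ Finset.Ioc ℓ m, mgf (B j) μ 1
        ≤ ∏ j ∈ Finset.Ioc ℓ m, (((j : ℝ) + 1) / (j : ℝ)) ^ 2 :=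
          Finset.prod_le_prod (fun j _ => mgf_nonneg) hfac
      _ = (∏ j ∈ Finset.Ioc ℓ m, (((j : ℝ) + 1) / (j : ℝ))) ^ 2 := by
          rw [Finset.prod_pow]
      _ = (((m : ℝ) + 1) / ((ℓ : ℝ) + 1)) ^ 2 := by rw [telesc ℓ m hm.le]
  -- Chernoff
  have hintsum : Integrable (fun ω => Real.exp (1 * (∑ j ∈ Finset.Ioc ℓ m, B j) ω)) μ :=
    hindep.integrable_exp_mul_sum hmeas (fun j _ => hint j)
  have hcher := measure_ge_le_exp_mul_mgf (X := ∑ j ∈ Finset.Ioc ℓ m, B j) (μ := μ) c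
    zero_le_one hintsum
  have hmono : μ {ω | c < ∑ j ∈ Finset.Ioc ℓ m, B j ω}
      ≤ μ {ω | c ≤ (∑ j ∈ Finset.Ioc ℓ m, B j) ω} := by
    apply measure_mono
    intro ω hω
    simp only [Set.mem_setOf_eq, Finset.sum_apply] at *
    exact hω.le
  refine le_trans hmono ?_
  rw [← ENNReal.ofReal_toReal (measure_ne_top μ _)]
  apply ENNReal.ofReal_le_ofReal
  refine le_trans hcher ?_
  rw [hsum]
  have hexp : (0 : ℝ) < Real.exp c := Real.exp_pos c
  have hstep : Real.exp (-1 * c) * (∏ j ∈ Finset.Ioc ℓ m, mgf (B j) μ 1)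
      ≤ Real.exp (-1 * c) * (((m : ℝ) + 1) / ((ℓ : ℝ) + 1)) ^ 2 := by
    apply mul_le_mul_of_nonneg_left hprod (Real.exp_nonneg _)
  refine le_trans hstep ?_
  rw [neg_one_mul, Real.exp_neg]
  have hℓpos : (1 : ℝ) ≤ ℓ := by exact_mod_cast hℓ
  have hmpos : (0 : ℝ) ≤ m := Nat.cast_nonneg m
  have key : (((m : ℝ) + 1) / ((ℓ : ℝ) + 1)) ^ 2 ≤ ((m : ℝ) + 2) ^ 2 / (ℓ : ℝ) ^ 2 := by
    rw [div_pow, div_le_div_iff₀ (by positivity) (by positivity)]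
    nlinarith
  calc (Real.exp c)⁻¹ * (((m : ℝ) + 1) / ((ℓ : ℝ) + 1)) ^ 2
      ≤ (Real.exp c)⁻¹ * (((m : ℝ) + 2) ^ 2 / (ℓ : ℝ) ^ 2) := by
        apply mul_le_mul_of_nonneg_left key (by positivity)
    _ = ((m : ℝ) + 2) ^ 2 / ((ℓ : ℝ) ^ 2 * Real.exp c) := by
        field_simp
end

section
/- Let $S_k$ denote the number of singleton-parents (vertices whose set of children is a single leaf) in a uniform random recursive tree $T_k$, and $L_k$ the number of leaves. Then $\mathbb{E}[S_{k+1} \mid T_k] = (1 - 2/k) S_k + L_k/k$, and consequently $\mathbb{E} S_\ell = \ell/6$ for all $\ell \ge$ some small initial value where the recursion and $\mathbb{E} L_k = k/2$ hold. -/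
open MeasureTheory
open scoped Classical

/-- The parent map of a recursive tree on vertices `0,1,…` encoded by attachment choices
`a`: vertex `w` (for `1 ≤ w ≤ m`) is attached to the earlier vertex `a ⟨w-1⟩ ∈ {0,…,w-1}`;
the root `0` is mapped to itself. -/
def parentFun (m : ℕ) (a : ∀ i : Fin m, Fin ((i : ℕ) + 1)) : ℕ → ℕ := fun w =>
  if h : w - 1 < m then (a ⟨w - 1, h⟩ : ℕ) else 0

/-- The children of `v` among the vertices `{1,…,n-1}` under parent map `par`. -/
def childrenF (n : ℕ) (par : ℕ → ℕ) (v : ℕ) : Finset ℕ :=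
  (Finset.Ioo 0 n).filter fun w => par w = v

/-- The number of leaves (non-root vertices with no children) of the tree on `{0,…,n-1}`. -/
noncomputable def leafCount (n : ℕ) (par : ℕ → ℕ) : ℕ :=
  ((Finset.range n).filter fun v => 0 < v ∧ childrenF n par v = ∅).card

/-- The number `S` of singleton-parents: vertices whose set of children is a single leaf. -/
noncomputable def singletonParentCount (n : ℕ) (par : ℕ → ℕ) : ℕ :=
  ((Finset.range n).filter fun v =>
    ∃ d ∈ Finset.range n, childrenF n par v = {d} ∧ childrenF n par d = ∅).card

/-- The uniform random recursive tree on `n` vertices, encoded by its uniform attachment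
vector. -/
noncomputable def urrt (n : ℕ) : Measure (∀ i : Fin (n - 1), Fin ((i : ℕ) + 1)) :=
  (PMF.uniformOfFintype _).toMeasure

-- children extension lemma
lemma childrenF_ext (k v : ℕ) (par : ℕ → ℕ) (hv : v < k) (u : ℕ) :
    childrenF (k + 1) (fun w => if w = k then v else par w) u =
      childrenF k par u ∪ (if u = v then {k} else ∅) := by
  ext w
  simp only [childrenF, Finset.mem_filter, Finset.mem_Ioo, Finset.mem_union]
  by_cases hw : w = k
  · subst hw
    simp only [if_pos rfl]
    constructor
    · rintro ⟨⟨h0, _⟩, hh⟩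
      right
      split
      · simp
      · next h => exact absurd hh.symm h
    · rintro (⟨⟨h0, hk⟩, _⟩ | h)
      · omega
      · split at h
        · next h' => subst h'; simp_all; omega
        · simp at h
  · simp only [if_neg hw]
    constructor
    · rintro ⟨⟨h0, hk1⟩, hh⟩
      left
      refine ⟨⟨h0, ?_⟩, hh⟩
      omega
    · rintro (⟨⟨h0, hk⟩, hh⟩ | h)
      · exact ⟨⟨h0, by omega⟩, hh⟩
      · split at h
        · simp at h; omega
        · simp at h

lemma mem_childrenF {n : ℕ} {par : ℕ → ℕ} {u w : ℕ} :
    w ∈ childrenF n par u ↔ 0 < w ∧ w < n ∧ par w = u := by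
  simp [childrenF, and_assoc]

lemma childrenF_k_empty (k : ℕ) (par : ℕ → ℕ)
    (hpar : ∀ w, 1 ≤ w → w < k → par w < w) : childrenF k par k = ∅ := by
  ext w
  simp only [mem_childrenF, Finset.notMem_empty, iff_false]
  rintro ⟨h0, hk, hp⟩
  have := hpar w h0 hk
  omega

lemma sp_filter_eq (k : ℕ) (par : ℕ → ℕ) (hk : 2 ≤ k)
    (hpar : ∀ w, 1 ≤ w → w < k → par w < w) (v : ℕ) (hv : v < k) :
    (Finset.range (k+1)).filter (fun u => ∃ d ∈ Finset.range (k+1),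
        childrenF (k+1) (fun w => if w = k then v else par w) u = {d} ∧
        childrenF (k+1) (fun w => if w = k then v else par w) d = ∅) =
    (((Finset.range k).filter (fun u => ∃ d ∈ Finset.range k,
        childrenF k par u = {d} ∧ childrenF k par d = ∅)).filter
        (fun u => u ≠ v ∧ childrenF k par u ≠ {v}))
      ∪ (if childrenF k par v = ∅ then {v} else ∅) := by
  have hCk : childrenF k par k = ∅ := childrenF_k_empty k par hpar
  have hkv : ¬ (k = v) := by omega
  ext u
  simp only [Finset.mem_filter, Finset.mem_range, Finset.mem_union,
    childrenF_ext k v par hv]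
  constructor
  · rintro ⟨hu, d, hd, h1, h2⟩
    by_cases huv : u = v
    · right
      rw [if_pos huv] at h1
      have hkmem : k ∈ childrenF k par u ∪ {k} := by simp
      rw [h1] at hkmem
      simp only [Finset.mem_singleton] at hkmem
      have hCv : childrenF k par v = ∅ := by
        ext w
        simp only [Finset.notMem_empty, iff_false]
        intro hw
        have : w ∈ childrenF k par u ∪ {k} := Finset.mem_union_left _ (huv ▸ hw)
        rw [h1, Finset.mem_singleton] at this
        have := mem_childrenF.1 hw
        omega
      rw [if_pos hCv]
      simp [huv]
    · simp only [if_neg huv, Finset.union_empty] at h1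
      left
      have hdv : d ≠ v := by
        intro hdv
        rw [if_pos hdv, Finset.union_eq_empty] at h2
        simp at h2
      simp only [if_neg hdv, Finset.union_empty] at h2
      have huk : u ≠ k := by
        intro huk
        subst huk
        rw [hCk] at h1
        exact Finset.singleton_ne_empty d h1.symm
      have hdmem : d ∈ childrenF k par u := by rw [h1]; simp
      have hd' := mem_childrenF.1 hdmem
      refine ⟨⟨by omega, d, by omega, h1, h2⟩, huv, ?_⟩
      rw [h1]
      simp [hdv]
  · rintro (⟨⟨hu, d, hd, h1, h2⟩, huv, hne⟩ | hmem)
    · have hdv : d ≠ v := by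
        intro hdv; subst hdv; exact hne h1
      refine ⟨by omega, d, by omega, ?_, ?_⟩
      · rw [if_neg huv, Finset.union_empty]; exact h1
      · rw [if_neg hdv, Finset.union_empty]; exact h2
    · split at hmem
      · next hCv =>
        simp only [Finset.mem_singleton] at hmem
        subst hmem
        refine ⟨by omega, k, by omega, ?_, ?_⟩
        · rw [if_pos rfl, hCv]; simp
        · rw [if_neg hkv, Finset.union_empty]; exact hCk
      · simp at hmem

lemma sp_inner_card (k : ℕ) (par : ℕ → ℕ) (hk : 2 ≤ k)
    (hpar : ∀ w, 1 ≤ w → w < k → par w < w) (u : ℕ)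
    (hu : u ∈ (Finset.range k).filter (fun u => ∃ d ∈ Finset.range k,
        childrenF k par u = {d} ∧ childrenF k par d = ∅)) :
    ((Finset.range k).filter (fun v => u ≠ v ∧ childrenF k par u ≠ {v})).card = k - 2 := by
  simp only [Finset.mem_filter, Finset.mem_range] at hu
  obtain ⟨huk, d, hdk, h1, h2⟩ := hu
  have hdmem : d ∈ childrenF k par u := by rw [h1]; simp
  obtain ⟨hd0, hdk', hpd⟩ := mem_childrenF.1 hdmem
  have hdu : d ≠ u := by have := hpar d hd0 hdk'; omega
  have hset : (Finset.range k).filter (fun v => u ≠ v ∧ childrenF k par u ≠ {v})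
      = Finset.range k \ {u, d} := by
    ext v
    simp only [Finset.mem_filter, Finset.mem_range, Finset.mem_sdiff, Finset.mem_insert,
      Finset.mem_singleton, h1, ne_eq, Finset.singleton_inj]
    omega
  rw [hset, Finset.card_sdiff_of_subset]
  · rw [Finset.card_range, Finset.card_insert_of_notMem (by simp [hdu.symm]),
      Finset.card_singleton]
  · intro x hx
    simp only [Finset.mem_insert, Finset.mem_singleton] at hx
    rcases hx with rfl | rfl <;> simp [Finset.mem_range, *]

lemma leaf_filter_eq (k : ℕ) (par : ℕ → ℕ) (hk : 2 ≤ k)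
    (hpar : ∀ w, 1 ≤ w → w < k → par w < w) :
    (Finset.range k).filter (fun v => childrenF k par v = ∅)
      = (Finset.range k).filter (fun v => 0 < v ∧ childrenF k par v = ∅) := by
  have h1 : (1 : ℕ) ∈ childrenF k par 0 := by
    rw [mem_childrenF]
    have := hpar 1 le_rfl (by omega)
    omega
  ext v
  simp only [Finset.mem_filter, Finset.mem_range]
  constructor
  · rintro ⟨hv, hc⟩
    refine ⟨hv, ?_, hc⟩
    rcases Nat.eq_zero_or_pos v with rfl | h
    · rw [hc] at h1; simp at h1
    · exact h
  · rintro ⟨hv, _, hc⟩; exact ⟨hv, hc⟩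

lemma card_filter_eq_of_iff {α : Type*} {p : α → Prop} (hp : DecidablePred p)
    (s t : Finset α) (h : ∀ x, (x ∈ s ∧ p x) ↔ x ∈ t) :
    (@Finset.filter α p hp s).card = t.card := by
  congr 1
  ext x
  rw [Finset.mem_filter]
  exact h x

lemma sp_sum_nat (k : ℕ) (par : ℕ → ℕ) (hk : 2 ≤ k)
    (hpar : ∀ w, 1 ≤ w → w < k → par w < w) :
    ∑ v ∈ Finset.range k,
        singletonParentCount (k + 1) (fun w => if w = k then v else par w)
      = singletonParentCount k par * (k - 2) + leafCount k par := by
  have key : ∀ v ∈ Finset.range k,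
      singletonParentCount (k + 1) (fun w => if w = k then v else par w)
        = (((Finset.range k).filter (fun u => ∃ d ∈ Finset.range k,
            childrenF k par u = {d} ∧ childrenF k par d = ∅)).filter
            (fun u => u ≠ v ∧ childrenF k par u ≠ {v})).card
          + (if childrenF k par v = ∅ then 1 else 0) := by
    intro v hv
    rw [Finset.mem_range] at hv
    have hs := sp_filter_eq k par hk hpar v hv
    have hiff := Finset.ext_iff.mp hs
    simp only [Finset.mem_filter] at hiff
    rw [singletonParentCount]
    refine Eq.trans (card_filter_eq_of_iff _ _ _ hiff) ?_
    rw [Finset.card_union_of_disjoint, apply_ite Finset.card]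
    · simp
    · rw [Finset.disjoint_right]
      intro x hx
      split at hx
      · simp only [Finset.mem_singleton] at hx
        subst hx
        simp only [Finset.mem_filter]
        rintro ⟨_, h, _⟩
        exact h rfl
      · simp at hx
  rw [Finset.sum_congr rfl key, Finset.sum_add_distrib]
  congr 1
  · rw [Finset.sum_congr rfl (fun v hv => Finset.card_filter _ _), Finset.sum_comm]
    rw [Finset.sum_congr rfl (fun u hu => (Finset.card_filter _ _).symm),
      Finset.sum_congr rfl (sp_inner_card k par hk hpar), Finset.sum_const,
      smul_eq_mul]
    have hS : singletonParentCount k par = ((Finset.range k).filter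
        (fun u => ∃ d ∈ Finset.range k,
          childrenF k par u = {d} ∧ childrenF k par d = ∅)).card := by
      rw [singletonParentCount]
    rw [hS, mul_comm]
  · have h1 : (1 : ℕ) ∈ childrenF k par 0 := by
      rw [mem_childrenF]
      have := hpar 1 le_rfl (by omega)
      omega
    rw [leafCount, Finset.card_filter]
    refine Finset.sum_congr rfl fun v hv => ?_
    by_cases h : childrenF k par v = ∅
    · have hv0 : 0 < v := by
        rcases Nat.eq_zero_or_pos v with rfl | hp
        · rw [h] at h1; simp at h1
        · exact hp
      rw [if_pos h, if_pos ⟨hv0, h⟩]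
    · rw [if_neg h, if_neg (fun hh => h hh.2)]

lemma leaf_ext_filter (k : ℕ) (par : ℕ → ℕ) (hk : 2 ≤ k)
    (hpar : ∀ w, 1 ≤ w → w < k → par w < w) (v : ℕ) (hv : v < k) :
    (Finset.range (k+1)).filter
        (fun u => 0 < u ∧ childrenF (k+1) (fun w => if w = k then v else par w) u = ∅)
      = (((Finset.range k).filter (fun u => 0 < u ∧ childrenF k par u = ∅)) \ {v}) ∪ {k} := by
  ext u
  simp only [Finset.mem_filter, Finset.mem_range, Finset.mem_union, Finset.mem_sdiff,
    Finset.mem_singleton, childrenF_ext k v par hv]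
  constructor
  · rintro ⟨hu, h0, hc⟩
    rw [Finset.union_eq_empty] at hc
    rcases Nat.lt_or_ge u k with h | h
    · left
      refine ⟨⟨h, h0, hc.1⟩, ?_⟩
      intro huv
      rw [if_pos huv] at hc
      exact Finset.singleton_ne_empty k hc.2
    · right; omega
  · rintro (⟨⟨hu, h0, hc⟩, hne⟩ | rfl)
    · refine ⟨by omega, h0, ?_⟩
      rw [if_neg hne, Finset.union_empty]
      exact hc
    · refine ⟨by omega, by omega, ?_⟩
      rw [if_neg (by omega), Finset.union_empty]
      exact childrenF_k_empty _ par hpar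

lemma leaf_ext_count (k : ℕ) (par : ℕ → ℕ) (hk : 2 ≤ k)
    (hpar : ∀ w, 1 ≤ w → w < k → par w < w) (v : ℕ) (hv : v < k) :
    (leafCount (k+1) (fun w => if w = k then v else par w) : ℝ)
      = (leafCount k par : ℝ) + 1
        - (if 0 < v ∧ childrenF k par v = ∅ then 1 else 0) := by
  have hs := leaf_ext_filter k par hk hpar v hv
  have hiff := Finset.ext_iff.mp hs
  simp only [Finset.mem_filter] at hiff
  have hL : leafCount k par
      = ((Finset.range k).filter (fun u => 0 < u ∧ childrenF k par u = ∅)).card := by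
    rw [leafCount]
  have hcount : leafCount (k+1) (fun w => if w = k then v else par w)
      = ((((Finset.range k).filter (fun u => 0 < u ∧ childrenF k par u = ∅)) \ {v})
          ∪ {k}).card := by
    rw [leafCount]
    exact card_filter_eq_of_iff _ _ _ hiff
  have hdisj : Disjoint (((Finset.range k).filter
      (fun u => 0 < u ∧ childrenF k par u = ∅)) \ {v}) ({k} : Finset ℕ) := by
    rw [Finset.disjoint_right]
    intro x hx
    simp only [Finset.mem_singleton] at hx
    subst hx
    simp only [Finset.mem_sdiff, Finset.mem_filter, Finset.mem_range]
    rintro ⟨⟨h, _⟩, _⟩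
    omega
  rw [hcount, Finset.card_union_of_disjoint hdisj, Finset.card_singleton]
  by_cases hm : v ∈ (Finset.range k).filter (fun u => 0 < u ∧ childrenF k par u = ∅)
  · have hmem := (Finset.mem_filter.mp hm).2
    rw [Finset.card_sdiff_of_subset (Finset.singleton_subset_iff.2 hm), Finset.card_singleton,
      if_pos hmem]
    have hpos : 1 ≤ ((Finset.range k).filter
        (fun u => 0 < u ∧ childrenF k par u = ∅)).card :=
      Finset.card_pos.mpr ⟨v, hm⟩
    rw [hL]
    push_cast [Nat.cast_sub hpos]
    ring
  · have hnot : ¬ (0 < v ∧ childrenF k par v = ∅) := by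
      intro h
      exact hm (Finset.mem_filter.mpr ⟨Finset.mem_range.mpr hv, h⟩)
    rw [Finset.sdiff_eq_self_of_disjoint (by simpa using hm), if_neg hnot, hL]
    push_cast
    ring

lemma leaf_sum (k : ℕ) (par : ℕ → ℕ) (hk : 2 ≤ k)
    (hpar : ∀ w, 1 ≤ w → w < k → par w < w) :
    ∑ v ∈ Finset.range k,
        (leafCount (k+1) (fun w => if w = k then v else par w) : ℝ)
      = ((k : ℝ) - 1) * (leafCount k par : ℝ) + k := by
  rw [Finset.sum_congr rfl (fun v hv =>
    leaf_ext_count k par hk hpar v (Finset.mem_range.mp hv))]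
  rw [Finset.sum_sub_distrib, Finset.sum_const, Finset.card_range]
  have hsum : ∑ v ∈ Finset.range k,
      (if 0 < v ∧ childrenF k par v = ∅ then (1:ℝ) else 0) = (leafCount k par : ℝ) := by
    rw [Finset.sum_boole, leafCount]
  rw [hsum]
  ring

def sEquiv (m : ℕ) : (∀ i : Fin (m+1), Fin ((i:ℕ)+1)) ≃ (Fin (m+1) × ∀ i : Fin m, Fin ((i:ℕ)+1)) where
  toFun a := (a (Fin.last m), fun i => a i.castSucc)
  invFun p := Fin.snoc (α := fun i : Fin (m+1) => Fin ((i:ℕ)+1)) p.2 p.1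
  left_inv a := by
    funext i
    refine Fin.lastCases ?_ (fun j => ?_) i
    · simp
    · simp
  right_inv p := by
    refine Prod.ext ?_ ?_
    · simp
    · funext i; simp

lemma parentFun_snoc (m : ℕ) (hm : 1 ≤ m) (a' : ∀ i : Fin m, Fin ((i:ℕ)+1)) (v : Fin (m+1)) :
    parentFun (m+1) ((sEquiv m).symm (v, a'))
      = fun w => if w = m+1 then (v:ℕ) else parentFun m a' w := by
  funext w
  simp only [parentFun, sEquiv, Equiv.coe_fn_symm_mk]
  by_cases hw : w = m+1
  · subst hw
    rw [dif_pos (by omega), if_pos rfl]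
    have h1 : ¬ (m + 1 - 1 < m) := by omega
    simp [Fin.snoc, h1]
  · rcases Nat.lt_or_ge (w-1) m with h | h
    · rw [dif_pos (by omega), if_neg hw, dif_pos h]
      simp [Fin.snoc, h]
    · rw [dif_neg (by omega), if_neg hw, dif_neg (by omega)]

lemma sum_decomp (m : ℕ) (hm : 1 ≤ m) (f : (ℕ → ℕ) → ℝ) :
    ∑ a : (∀ i : Fin (m+1), Fin ((i:ℕ)+1)), f (parentFun (m+1) a)
      = ∑ a' : (∀ i : Fin m, Fin ((i:ℕ)+1)), ∑ v ∈ Finset.range (m+1),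
          f (fun w => if w = m+1 then v else parentFun m a' w) := by
  rw [← Equiv.sum_comp (sEquiv m).symm (fun a => f (parentFun (m+1) a))]
  rw [Fintype.sum_prod_type, Finset.sum_comm]
  refine Finset.sum_congr rfl fun a' _ => ?_
  rw [Finset.sum_congr rfl (fun v _ => by rw [parentFun_snoc m hm a' v])]
  exact Fin.sum_univ_eq_sum_range
    (fun i => f (fun w => if w = m+1 then i else parentFun m a' w)) (m+1)

lemma card_pi_succ (m : ℕ) :
    (Fintype.card (∀ i : Fin (m+1), Fin ((i:ℕ)+1)) : ℝ)
      = (m+1) * (Fintype.card (∀ i : Fin m, Fin ((i:ℕ)+1)) : ℝ) := by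
  rw [Fintype.card_congr (sEquiv m), Fintype.card_prod, Fintype.card_fin]
  push_cast
  ring

lemma parentFun_valid (m : ℕ) (a : ∀ i : Fin m, Fin ((i:ℕ)+1)) :
    ∀ w, 1 ≤ w → w < m + 1 → parentFun m a w < w := by
  intro w h1 h2
  rw [parentFun]
  split
  · next h =>
    have hlt := (a ⟨w-1, h⟩).is_lt
    have hval : ((⟨w-1, h⟩ : Fin m) : ℕ) = w - 1 := rfl
    omega
  · next h => omega

lemma parentFun_one (a : ∀ i : Fin 1, Fin ((i:ℕ)+1)) : parentFun 1 a = fun _ => 0 := by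
  funext w
  rw [parentFun]
  split
  · next h =>
    have hlt := (a ⟨w-1, h⟩).is_lt
    have hval : ((⟨w-1, h⟩ : Fin 1) : ℕ) = w - 1 := rfl
    omega
  · rfl

lemma childrenF_two_zero (u : ℕ) (hu : 0 < u) : childrenF 2 (fun _ => 0) u = ∅ := by
  ext w
  simp only [mem_childrenF, Finset.notMem_empty, iff_false]
  rintro ⟨h1, h2, h3⟩
  omega

lemma leafCount_two : leafCount 2 (fun _ => 0) = 1 := by
  rw [leafCount, Finset.card_eq_one]
  refine ⟨1, ?_⟩
  rw [Finset.eq_singleton_iff_unique_mem]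
  constructor
  · simp only [Finset.mem_filter, Finset.mem_range]
    exact ⟨by omega, by omega, childrenF_two_zero 1 one_pos⟩
  · intro x hx
    simp only [Finset.mem_filter, Finset.mem_range] at hx
    omega

lemma card_pi_one : Fintype.card (∀ i : Fin 1, Fin ((i:ℕ)+1)) = 1 := by
  simp [Fintype.card_pi]

lemma card_pi_two : Fintype.card (∀ i : Fin 2, Fin ((i:ℕ)+1)) = 2 := by
  simp [Fintype.card_pi, Fin.prod_univ_two]

lemma EL_eq : ∀ m, 1 ≤ m →
    ∑ a : (∀ i : Fin m, Fin ((i:ℕ)+1)), (leafCount (m+1) (parentFun m a) : ℝ)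
      = (Fintype.card (∀ i : Fin m, Fin ((i:ℕ)+1)) : ℝ) * ((m:ℝ)+1) / 2 := by
  refine Nat.le_induction ?_ ?_
  · have h1 : ∀ a : (∀ i : Fin 1, Fin ((i:ℕ)+1)),
        (leafCount (1+1) (parentFun 1 a) : ℝ) = 1 := by
      intro a
      rw [parentFun_one a]
      norm_num [leafCount_two]
    rw [Finset.sum_congr rfl (fun a _ => h1 a), Finset.sum_const, card_pi_one]
    norm_num
  · intro m hm ih
    rw [sum_decomp m hm (fun p => (leafCount (m+1+1) p : ℝ))]
    have key : ∀ a' : (∀ i : Fin m, Fin ((i:ℕ)+1)),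
        ∑ v ∈ Finset.range (m+1),
            (leafCount (m+1+1) (fun w => if w = m+1 then v else parentFun m a' w) : ℝ)
          = ((m:ℝ)+1-1) * (leafCount (m+1) (parentFun m a') : ℝ) + ((m:ℝ)+1) := by
      intro a'
      have := leaf_sum (m+1) (parentFun m a') (by omega) (parentFun_valid m a')
      push_cast at this ⊢
      exact this
    rw [Finset.sum_congr rfl (fun a' _ => key a'), Finset.sum_add_distrib,
      ← Finset.mul_sum, ih, Finset.sum_const, Finset.card_univ, card_pi_succ]
    push_cast
    ring

lemma ES_step (m : ℕ) (hm : 1 ≤ m) :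
    ∑ a : (∀ i : Fin (m+1), Fin ((i:ℕ)+1)),
        (singletonParentCount (m+1+1) (parentFun (m+1) a) : ℝ)
      = ((m:ℝ) - 1) * (∑ a : (∀ i : Fin m, Fin ((i:ℕ)+1)),
            (singletonParentCount (m+1) (parentFun m a) : ℝ))
        + ∑ a : (∀ i : Fin m, Fin ((i:ℕ)+1)), (leafCount (m+1) (parentFun m a) : ℝ) := by
  rw [sum_decomp m hm (fun p => (singletonParentCount (m+1+1) p : ℝ))]
  have key : ∀ a' : (∀ i : Fin m, Fin ((i:ℕ)+1)),
      ∑ v ∈ Finset.range (m+1),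
          (singletonParentCount (m+1+1) (fun w => if w = m+1 then v else parentFun m a' w) : ℝ)
        = ((m:ℝ)-1) * (singletonParentCount (m+1) (parentFun m a') : ℝ)
          + (leafCount (m+1) (parentFun m a') : ℝ) := by
    intro a'
    have h := sp_sum_nat (m+1) (parentFun m a') (by omega) (parentFun_valid m a')
    rw [show m + 1 - 2 = m - 1 by omega] at h
    rw [← Nat.cast_sum, h]
    push_cast [Nat.cast_sub hm]
    ring
  rw [Finset.sum_congr rfl (fun a' _ => key a'), Finset.sum_add_distrib, ← Finset.mul_sum]

lemma ES_eq : ∀ m, 2 ≤ m →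
    ∑ a : (∀ i : Fin m, Fin ((i:ℕ)+1)),
        (singletonParentCount (m+1) (parentFun m a) : ℝ)
      = (Fintype.card (∀ i : Fin m, Fin ((i:ℕ)+1)) : ℝ) * ((m:ℝ)+1) / 6 := by
  refine Nat.le_induction ?_ ?_
  · have h := ES_step 1 le_rfl
    rw [EL_eq 1 le_rfl, card_pi_one] at h
    norm_num at h
    rw [card_pi_two]
    norm_num
    exact h
  · intro m hm ih
    rw [ES_step m (by omega), ih, EL_eq m (by omega), card_pi_succ]
    push_cast
    ring

lemma integral_uniform {α : Type*} [Fintype α] [Nonempty α] [MeasurableSpace α]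
    [MeasurableSingletonClass α] (f : α → ℝ) :
    ∫ a, f a ∂((PMF.uniformOfFintype α).toMeasure)
      = (Fintype.card α : ℝ)⁻¹ * ∑ a, f a := by
  rw [integral_fintype (Integrable.of_finite), Finset.mul_sum]
  refine Finset.sum_congr rfl fun x _ => ?_
  rw [measureReal_def, PMF.toMeasure_apply_singleton _ x (measurableSet_singleton x),
    PMF.uniformOfFintype_apply, smul_eq_mul]
  congr 1
  rw [ENNReal.toReal_inv]
  norm_num

/-- Let `S_k` be the number of singleton-parents and `L_k` the number of
leaves of a uniform random recursive tree `T_k`.  Conditionally on `T_k` (i.e., for every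
fixed recursive tree on `k ≥ 2` vertices, averaging over the uniform attachment of vertex
`k+1`), `E[S_{k+1} | T_k] = (1 - 2/k) S_k + L_k/k`; consequently `E S_ℓ = ℓ/6` for all
`ℓ ≥ 3`. -/
theorem stmt14 :
    (∀ (k : ℕ) (par : ℕ → ℕ), 2 ≤ k → (∀ w, 1 ≤ w → w < k → par w < w) →
      (1 / (k : ℝ)) * ∑ v ∈ Finset.range k,
          (singletonParentCount (k + 1) (fun w => if w = k then v else par w) : ℝ) =
        (1 - 2 / (k : ℝ)) * (singletonParentCount k par : ℝ) + (leafCount k par : ℝ) / k) ∧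
    (∀ ℓ : ℕ, 3 ≤ ℓ →
      (∫ a, (singletonParentCount ℓ (parentFun (ℓ - 1) a) : ℝ) ∂urrt ℓ) = (ℓ : ℝ) / 6) := by
  constructor
  · intro k par hk hpar
    have h := sp_sum_nat k par hk hpar
    have hk0 : (k:ℝ) ≠ 0 := Nat.cast_ne_zero.mpr (by omega)
    have hcast : ∑ v ∈ Finset.range k,
        (singletonParentCount (k + 1) (fun w => if w = k then v else par w) : ℝ)
        = (singletonParentCount k par : ℝ) * ((k:ℝ) - 2) + (leafCount k par : ℝ) := by
      rw [← Nat.cast_sum, h]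
      push_cast [Nat.cast_sub hk]
      ring
    rw [hcast]
    field_simp
  · intro ℓ hl
    obtain ⟨m, rfl⟩ : ∃ m, ℓ = m + 1 := ⟨ℓ - 1, by omega⟩
    have hm : 2 ≤ m := by omega
    have hcard0 : (Fintype.card (∀ i : Fin m, Fin ((i:ℕ)+1)) : ℝ) ≠ 0 :=
      Nat.cast_ne_zero.mpr Fintype.card_ne_zero
    have key : ∫ a : (∀ i : Fin m, Fin ((i:ℕ)+1)),
        (singletonParentCount (m+1) (parentFun m a) : ℝ)
        ∂((PMF.uniformOfFintype _).toMeasure) = ((m:ℝ)+1)/6 := by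
      rw [integral_uniform, ES_eq m hm]
      field_simp
    have hc : ((m+1 : ℕ) : ℝ) = (m:ℝ)+1 := by push_cast; ring
    rw [hc]
    exact key
end
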